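/- Let G be a finite abelian group of type (n_1, …, n_r) and order n = n_1⋯n_r, let m ≤ n be a positive integer, and let h ≥ 2. Then u±(G, m, h) = min{f_d(m, h) : d ∈ D(G, m)}, where u±(G, m, h) = min{Π_{i=1}^r u(n_i, m_i, h) : 1 ≤ m_i ≤ n_i for each i and Π_{i=1}^r m_i ≥ m}, and D(G, m) = {d dividing n : d = d_1⋯d_r with each d_i dividing n_i and d·n_r ≥ d_r·m}. -/

import Mathlib

open Finset Pointwise

/-- The `h`-fold sumset of a finite subset `A` of an abelian group:
`hA = {Σ λ_a • a : λ : A → ℕ, Σ λ_a = h}`. -/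
def foldSumset {G : Type*} [AddCommGroup G] (h : ℕ) (A : Finset G) : Set G :=
  {g | ∃ c : G → ℕ, (∑ a ∈ A, c a) = h ∧ (∑ a ∈ A, c a • a) = g}

/-- The `h`-fold signed sumset of a finite subset `A` of an abelian group:
`h±A = {Σ λ_a • a : λ : A → ℤ, Σ |λ_a| = h}`. -/
def foldSignedSumset {G : Type*} [AddCommGroup G] (h : ℕ) (A : Finset G) : Set G :=
  {g | ∃ c : G → ℤ, (∑ a ∈ A, (c a).natAbs) = h ∧ (∑ a ∈ A, c a • a) = g}

/-- `ρ(G, m, h) = min {|hA| : A ⊆ G, |A| = m}`. -/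
noncomputable def rho (G : Type*) [AddCommGroup G] (m h : ℕ) : ℕ :=
  sInf {k | ∃ A : Finset G, A.card = m ∧ (foldSumset h A).ncard = k}

/-- `ρ±(G, m, h) = min {|h±A| : A ⊆ G, |A| = m}`. -/
noncomputable def rhoPM (G : Type*) [AddCommGroup G] (m h : ℕ) : ℕ :=
  sInf {k | ∃ A : Finset G, A.card = m ∧ (foldSignedSumset h A).ncard = k}

/-- `f_d(m, h) = (h⌈m/d⌉ - h + 1) d`. -/
def fdmh (d m h : ℕ) : ℕ := (h * ((m + d - 1) / d) - h + 1) * d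

/-- `u(n, m, h) = min {f_d(m, h) : d a positive divisor of n}`. -/
noncomputable def uFun (n m h : ℕ) : ℕ :=
  sInf {k | ∃ d : ℕ, 0 < d ∧ d ∣ n ∧ k = fdmh d m h}

/-! ### ceiling division -/

def nceil (m d : ℕ) : ℕ := (m + d - 1) / d

lemma nceil_le_iff {d : ℕ} (hd : 0 < d) {m k : ℕ} : nceil m d ≤ k ↔ m ≤ k * d := by
  unfold nceil
  rw [Nat.div_le_iff_le_mul_add_pred hd, mul_comm k d]
  generalize d * k = X
  omega

lemma le_nceil_mul {d : ℕ} (hd : 0 < d) (m : ℕ) : m ≤ nceil m d * d :=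
  (nceil_le_iff hd).1 le_rfl

lemma nceil_mono {d : ℕ} (hd : 0 < d) {m m' : ℕ} (hmm : m ≤ m') :
    nceil m d ≤ nceil m' d :=
  (nceil_le_iff hd).2 (hmm.trans (le_nceil_mul hd m'))

lemma nceil_pos {d m : ℕ} (hm : 0 < m) (hd : 0 < d) : 0 < nceil m d := by
  by_contra hc
  have h1 : nceil m d ≤ 0 := by omega
  have := (nceil_le_iff hd).1 h1
  omega

lemma nceil_nceil {c d : ℕ} (hc : 0 < c) (hd : 0 < d) (m : ℕ) :
    nceil (nceil m c) d = nceil m (c * d) := by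
  apply le_antisymm
  · refine (nceil_le_iff hd).2 ?_
    refine (nceil_le_iff hc).2 ?_
    calc m ≤ nceil m (c * d) * (c * d) := le_nceil_mul (Nat.mul_pos hc hd) m
    _ = nceil m (c * d) * d * c := by ring
  · refine (nceil_le_iff (Nat.mul_pos hc hd)).2 ?_
    calc m ≤ nceil m c * c := le_nceil_mul hc m
    _ ≤ (nceil (nceil m c) d * d) * c :=
        Nat.mul_le_mul_right c (le_nceil_mul hd _)
    _ = nceil (nceil m c) d * (c * d) := by ring

lemma nceil_mul_self {d : ℕ} (hd : 0 < d) (K : ℕ) : nceil (d * K) d = K := by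
  unfold nceil
  have h1 : d * K + d - 1 = d * K + (d - 1) := by omega
  rw [h1, Nat.mul_add_div hd, Nat.div_eq_of_lt (by omega)]
  omega

lemma nceil_one (m : ℕ) : nceil m 1 = m := by
  unfold nceil; simp

/-! ### fdmh basics -/

lemma fdmh_def (d m h : ℕ) : fdmh d m h = (h * nceil m d - h + 1) * d := rfl

lemma fdmh_pos {d : ℕ} (hd : 0 < d) (m h : ℕ) : 0 < fdmh d m h := by
  rw [fdmh_def]
  exact Nat.mul_pos (by omega) hd

lemma fdmh_mono {d : ℕ} (hd : 0 < d) (h : ℕ) {m m' : ℕ} (hmm : m ≤ m') :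
    fdmh d m h ≤ fdmh d m' h := by
  rw [fdmh_def, fdmh_def]
  have h1 := nceil_mono hd hmm (d := d)
  have h2 : h * nceil m d ≤ h * nceil m' d := Nat.mul_le_mul_left h h1
  exact Nat.mul_le_mul_right d (by omega)

lemma fdmh_mul {c d : ℕ} (hc : 0 < c) (hd : 0 < d) (m h : ℕ) :
    fdmh (c * d) m h = c * fdmh d (nceil m c) h := by
  rw [fdmh_def, fdmh_def, nceil_nceil hc hd]
  ring

lemma fdmh_mul_self {d : ℕ} (hd : 0 < d) (K h : ℕ) :
    fdmh d (d * K) h = (h * K - h + 1) * d := by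
  rw [fdmh_def, nceil_mul_self hd]

lemma fdmh_self {d : ℕ} (hd : 0 < d) (h : ℕ) : fdmh d d h = d := by
  have h1 := fdmh_mul_self hd 1 h
  simpa using h1

lemma key_ineq {h a b : ℕ} (hh : 2 ≤ h) (ha : 1 ≤ a) (hb : 1 ≤ b) :
    h * (a * b) - h + 1 ≤ (h * a - h + 1) * (h * b - h + 1) := by
  obtain ⟨α, rfl⟩ : ∃ α, a = α + 1 := ⟨a - 1, by omega⟩
  obtain ⟨β, rfl⟩ : ∃ β, b = β + 1 := ⟨b - 1, by omega⟩
  have e1 : h * ((α + 1) * (β + 1)) - h + 1 = h * (α * β + α + β) + 1 := by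
    have : h * ((α + 1) * (β + 1)) = h * (α * β + α + β) + h := by ring
    omega
  have e2 : h * (α + 1) - h + 1 = h * α + 1 := by
    have : h * (α + 1) = h * α + h := by ring
    omega
  have e3 : h * (β + 1) - h + 1 = h * β + 1 := by
    have : h * (β + 1) = h * β + h := by ring
    omega
  rw [e1, e2, e3]
  nlinarith [Nat.mul_le_mul_right (α * β) hh]

lemma fdmh_le_mul {e1 e2 m1 m2 M h : ℕ} (hh : 2 ≤ h) (he1 : 0 < e1) (he2 : 0 < e2)
    (hm1 : 0 < m1) (hm2 : 0 < m2) (hM : M ≤ m1 * m2) :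
    fdmh (e1 * e2) M h ≤ fdmh e1 m1 h * fdmh e2 m2 h := by
  set a := nceil m1 e1 with ha
  set b := nceil m2 e2 with hb
  have hapos : 1 ≤ a := nceil_pos hm1 he1
  have hbpos : 1 ≤ b := nceil_pos hm2 he2
  have hX : nceil M (e1 * e2) ≤ a * b := by
    refine (nceil_le_iff (Nat.mul_pos he1 he2)).2 ?_
    calc M ≤ m1 * m2 := hM
    _ ≤ (a * e1) * (b * e2) := Nat.mul_le_mul (le_nceil_mul he1 m1) (le_nceil_mul he2 m2)
    _ = a * b * (e1 * e2) := by ring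
  rw [fdmh_def, fdmh_def, fdmh_def]
  calc (h * nceil M (e1 * e2) - h + 1) * (e1 * e2)
      ≤ (h * (a * b) - h + 1) * (e1 * e2) := by
        have : h * nceil M (e1 * e2) ≤ h * (a * b) := Nat.mul_le_mul_left h hX
        exact Nat.mul_le_mul_right _ (by omega)
    _ ≤ ((h * a - h + 1) * (h * b - h + 1)) * (e1 * e2) :=
        Nat.mul_le_mul_right _ (key_ineq hh hapos hbpos)
    _ = (h * a - h + 1) * e1 * ((h * b - h + 1) * e2) := by ring

/-! ### uFun basics -/

lemma uFun_le {d n : ℕ} (hd : 0 < d) (hdvd : d ∣ n) (m h : ℕ) :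
    uFun n m h ≤ fdmh d m h :=
  Nat.sInf_le ⟨d, hd, hdvd, rfl⟩

lemma uFun_spec {n : ℕ} (hn : 0 < n) (m h : ℕ) :
    ∃ d : ℕ, 0 < d ∧ d ∣ n ∧ uFun n m h = fdmh d m h := by
  have hne : {k | ∃ d : ℕ, 0 < d ∧ d ∣ n ∧ k = fdmh d m h}.Nonempty :=
    ⟨fdmh n m h, n, hn, dvd_rfl, rfl⟩
  exact Nat.sInf_mem hne

lemma uFun_mono {n : ℕ} (hn : 0 < n) (h : ℕ) {m m' : ℕ} (hmm : m ≤ m') :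
    uFun n m h ≤ uFun n m' h := by
  obtain ⟨d, hd, hdvd, heq⟩ := uFun_spec hn m' h
  rw [heq]
  exact (uFun_le hd hdvd m h).trans (fdmh_mono hd h hmm)

/-! ### The two-coordinate core lemma -/

lemma lemmaF {ν n m1 m2 h : ℕ} (hνn : ν ∣ n) (hn : 0 < n) (hh : 2 ≤ h)
    (hm1 : 1 ≤ m1) (hm1ν : m1 ≤ ν) (hm2 : 1 ≤ m2) (hm2n : m2 ≤ n) :
    ∃ d : ℕ, 0 < d ∧ d ∣ ν ∧ m1 * m2 ≤ d * n ∧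
      d * uFun n (nceil (m1 * m2) d) h ≤ uFun ν m1 h * uFun n m2 h := by
  have hν : 0 < ν := hm1.trans hm1ν
  obtain ⟨e1, he1, he1dvd, hu1⟩ := uFun_spec hν m1 h
  obtain ⟨e2, he2, he2dvd, hu2⟩ := uFun_spec hn m2 h
  set M := m1 * m2 with hMdef
  have hMpos : 0 < M := Nat.mul_pos hm1 hm2
  set γ := Nat.gcd (e1 * e2) ν with hγdef
  have hγdvdν : γ ∣ ν := Nat.gcd_dvd_right _ _
  have hγdvdA : γ ∣ e1 * e2 := Nat.gcd_dvd_left _ _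
  have hγ : 0 < γ := Nat.gcd_pos_of_pos_right _ hν
  rcases le_or_gt M (γ * n) with hcase | hcase
  · -- Case A : d = γ
    refine ⟨γ, hγ, hγdvdν, hcase, ?_⟩
    set d' := (e1 * e2) / γ with hd'def
    have hγd' : γ * d' = e1 * e2 := Nat.mul_div_cancel' hγdvdA
    have hd' : 0 < d' := by
      rcases Nat.eq_zero_or_pos d' with h0 | h0
      · rw [h0, Nat.mul_zero] at hγd'
        exact absurd hγd'.symm (Nat.mul_ne_zero he1.ne' he2.ne')
      · exact h0
    have hd'n : d' ∣ n := by
      have hcop : Nat.Coprime d' (ν / γ) := by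
        have := Nat.coprime_div_gcd_div_gcd (m := e1 * e2) (n := ν) hγ
        exact this
      obtain ⟨ν₂, hν₂⟩ := hγdvdν
      obtain ⟨s, hs⟩ : e1 * e2 ∣ ν * n := mul_dvd_mul he1dvd he2dvd
      have hν₂eq : ν / γ = ν₂ := by rw [hν₂]; exact Nat.mul_div_cancel_left _ hγ
      have hkey : ν₂ * n = d' * s := by
        have h1 : γ * (ν₂ * n) = γ * (d' * s) := by
          calc γ * (ν₂ * n) = (γ * ν₂) * n := by ring
          _ = ν * n := by rw [← hν₂]
          _ = (e1 * e2) * s := hs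
          _ = (γ * d') * s := by rw [hγd']
          _ = γ * (d' * s) := by ring
        exact Nat.eq_of_mul_eq_mul_left hγ h1
      have hdvd2 : d' ∣ (ν / γ) * n := by
        rw [hν₂eq, hkey]; exact Dvd.intro s rfl
      exact hcop.dvd_of_dvd_mul_left hdvd2
    calc γ * uFun n (nceil M γ) h
        ≤ γ * fdmh d' (nceil M γ) h :=
          Nat.mul_le_mul_left γ (uFun_le hd' hd'n _ h)
      _ = fdmh (γ * d') M h := (fdmh_mul hγ hd' M h).symm
      _ = fdmh (e1 * e2) M h := by rw [hγd']
      _ ≤ fdmh e1 m1 h * fdmh e2 m2 h := fdmh_le_mul hh he1 he2 hm1 hm2 le_rfl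
      _ = uFun ν m1 h * uFun n m2 h := by rw [hu1, hu2]
  · -- Case B : d = ν
    refine ⟨ν, hν, dvd_rfl, Nat.mul_le_mul hm1ν hm2n, ?_⟩
    set w := ν / e1 with hwdef
    have hw : e1 * w = ν := Nat.mul_div_cancel' he1dvd
    have hwpos : 0 < w := by
      rcases Nat.eq_zero_or_pos w with h0 | h0
      · rw [h0, Nat.mul_zero] at hw; omega
      · exact h0
    have hwdvdn : w ∣ n := dvd_trans (Dvd.intro_left e1 hw) hνn
    set d'' := n / w with hd''def
    have hwd'' : w * d'' = n := Nat.mul_div_cancel' hwdvdn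
    have hd'' : 0 < d'' := by
      rcases Nat.eq_zero_or_pos d'' with h0 | h0
      · rw [h0, Nat.mul_zero] at hwd''; omega
      · exact h0
    have hνd'' : ν * d'' = e1 * n := by rw [← hw, ← hwd'']; ring
    -- the numeric core
    set t := n / e2 with htdef
    have hte2 : e2 * t = n := Nat.mul_div_cancel' he2dvd
    have ht : 0 < t := by
      rcases Nat.eq_zero_or_pos t with h0 | h0
      · rw [h0, Nat.mul_zero] at hte2; omega
      · exact h0
    set g := Nat.gcd e2 w with hgdef
    have hg : 0 < g := Nat.gcd_pos_of_pos_right _ hwpos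
    have hγeq : γ = e1 * g := by
      rw [hγdef, ← hw, Nat.gcd_mul_left]
    set a := nceil m1 e1 with hadef
    set b := nceil m2 e2 with hbdef
    have hm1a : m1 ≤ a * e1 := le_nceil_mul he1 m1
    have hm2b : m2 ≤ b * e2 := le_nceil_mul he2 m2
    -- (i) e1 * g < m1, hence g < a and 2 ≤ a
    have hi : e1 * g < m1 := by
      have h1 : e1 * g * n < m1 * n := by
        calc e1 * g * n = γ * n := by rw [hγeq]
        _ < M := hcase
        _ = m1 * m2 := hMdef
        _ ≤ m1 * n := Nat.mul_le_mul_left m1 hm2n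
      exact Nat.lt_of_mul_lt_mul_right h1
    have hga : g < a := by
      by_contra hcon
      push_neg at hcon
      have h2 : m1 ≤ e1 * g := by
        calc m1 ≤ a * e1 := hm1a
        _ ≤ g * e1 := Nat.mul_le_mul_right e1 hcon
        _ = e1 * g := mul_comm g e1
      omega
    have ha2 : 2 ≤ a := by
      have he1m1 : e1 < m1 := by
        have h3 : e1 * 1 ≤ e1 * g := Nat.mul_le_mul_left e1 hg
        have h4 : e1 * 1 = e1 := by ring
        omega
      by_contra hcon
      push_neg at hcon
      have h1 : a ≤ 1 := by omega
      have h2 := (nceil_le_iff he1).1 h1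
      rw [one_mul] at h2
      omega
    -- (ii) g * t < a * b
    have hii : g * t < a * b := by
      have h1 : (g * t) * (e1 * e2) < (a * b) * (e1 * e2) := by
        calc (g * t) * (e1 * e2) = (e1 * g) * (e2 * t) := by ring
        _ = γ * n := by rw [hγeq, hte2]
        _ < M := hcase
        _ ≤ (a * e1) * (b * e2) := Nat.mul_le_mul hm1a hm2b
        _ = (a * b) * (e1 * e2) := by ring
      exact Nat.lt_of_mul_lt_mul_right h1
    -- (iii) w ∣ g * t
    have hiii : w ∣ g * t := by
      set w' := w / g with hw'def
      set e2' := e2 / g with he2'def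
      have hgw : g * w' = w := Nat.mul_div_cancel' (Nat.gcd_dvd_right _ _)
      have hge2 : g * e2' = e2 := Nat.mul_div_cancel' (Nat.gcd_dvd_left _ _)
      have hcop : Nat.Coprime e2' w' := Nat.coprime_div_gcd_div_gcd hg
      have h1 : w ∣ e2 * t := by
        rw [hte2]
        exact dvd_trans (Dvd.intro_left e1 hw) hνn
      have h2 : g * w' ∣ g * (e2' * t) := by
        rw [hgw]
        calc w ∣ e2 * t := h1
        _ = g * (e2' * t) := by rw [← hge2]; ring
      have h3 : w' ∣ e2' * t := (mul_dvd_mul_iff_left hg.ne').1 h2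
      have h4 : w' ∣ t := (hcop.symm).dvd_of_dvd_mul_left h3
      calc w = g * w' := hgw.symm
      _ ∣ g * t := mul_dvd_mul_left g h4
    -- (iv) 2 ≤ b
    have hb2 : 2 ≤ b := by
      have hb1 : 1 ≤ b := nceil_pos hm2 he2
      by_contra hcon
      push_neg at hcon
      have hb1' : b = 1 := by omega
      have h1 : g * t < a := by
        have := hii
        rw [hb1', Nat.mul_one] at this
        exact this
      have h2 : w ≤ g * t := Nat.le_of_dvd (Nat.mul_pos hg ht) hiii
      have h3 : a ≤ w := by
        refine (nceil_le_iff he1).2 ?_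
        rw [mul_comm w e1, hw]
        exact hm1ν
      omega
    -- (v) K and t * (K - 1) < a * b
    set K := nceil M (e1 * n) with hKdef
    have he1n : 0 < e1 * n := Nat.mul_pos he1 hn
    have hK1 : 1 ≤ K := nceil_pos hMpos he1n
    have hv : (K - 1) * t < a * b := by
      have h1 : (K - 1) * (e1 * n) < M := by
        by_contra hcon
        push_neg at hcon
        have : K ≤ K - 1 := (nceil_le_iff he1n).2 hcon
        omega
      have h2 : ((K - 1) * t) * (e1 * e2) < (a * b) * (e1 * e2) := by
        calc ((K - 1) * t) * (e1 * e2) = (K - 1) * (e1 * (e2 * t)) := by ring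
        _ = (K - 1) * (e1 * n) := by rw [hte2]
        _ < M := h1
        _ ≤ (a * e1) * (b * e2) := Nat.mul_le_mul hm1a hm2b
        _ = (a * b) * (e1 * e2) := by ring
      exact Nat.lt_of_mul_lt_mul_right h2
    -- final numeric inequality
    have hcore : (h * K - h + 1) * t ≤ (h * a - h + 1) * (h * b - h + 1) := by
      have htg : t ≤ g * t := Nat.le_mul_of_pos_left t hg
      clear_value K a b
      obtain ⟨κ, rfl⟩ : ∃ κ, K = κ + 1 := ⟨K - 1, by omega⟩
      obtain ⟨α, rfl⟩ : ∃ α, a = α + 2 := ⟨a - 2, by omega⟩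
      obtain ⟨β, rfl⟩ : ∃ β, b = β + 2 := ⟨b - 2, by omega⟩
      obtain ⟨η, rfl⟩ : ∃ η, h = η + 2 := ⟨h - 2, by omega⟩
      have hq2 : t + 1 ≤ (α + 2) * (β + 2) := by omega
      have hq1 : κ * t + 1 ≤ (α + 2) * (β + 2) := by
        have h5 : (κ + 1 - 1) * t < (α + 2) * (β + 2) := hv
        simp only [Nat.add_sub_cancel] at h5
        omega
      have e1' : (η + 2) * (κ + 1) - (η + 2) + 1 = (η + 2) * κ + 1 := by
        have h6 : (η + 2) * (κ + 1) = (η + 2) * κ + (η + 2) := by ring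
        omega
      have e2' : (η + 2) * (α + 2) - (η + 2) + 1 = (η + 2) * (α + 1) + 1 := by
        have h6 : (η + 2) * (α + 2) = (η + 2) * (α + 1) + (η + 2) := by ring
        omega
      have e3' : (η + 2) * (β + 2) - (η + 2) + 1 = (η + 2) * (β + 1) + 1 := by
        have h6 : (η + 2) * (β + 2) = (η + 2) * (β + 1) + (η + 2) := by ring
        omega
      rw [e1', e2', e3']
      have hm' : (η + 2) * (κ * t) + (η + 2) ≤ (η + 2) * ((α + 2) * (β + 2)) := by
        calc (η + 2) * (κ * t) + (η + 2) = (η + 2) * (κ * t + 1) := by ring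
        _ ≤ (η + 2) * ((α + 2) * (β + 2)) := Nat.mul_le_mul_left _ hq1
      have h7 : ((η + 2) * κ + 1) * t = (η + 2) * (κ * t) + t := by ring
      have h8 : (η + 3) * ((α + 2) * (β + 2)) =
          (η + 2) * ((α + 2) * (β + 2)) + (α + 2) * (β + 2) := by ring
      have hL : ((η + 2) * κ + 1) * t + (η + 3) ≤ (η + 3) * ((α + 2) * (β + 2)) := by
        omega
      have hid : ((η + 2) * (α + 1) + 1) * ((η + 2) * (β + 1) + 1) + (η + 3) =
          (η + 3) * ((α + 2) * (β + 2)) +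
            (η * η * (α * β + α + β + 1) + 3 * (η * (α * β)) + 3 * (η * α) +
              3 * (η * β) + 3 * η + α * β) := by ring
      omega
    -- assemble case B
    calc ν * uFun n (nceil M ν) h
        ≤ ν * fdmh d'' (nceil M ν) h := Nat.mul_le_mul_left ν (uFun_le hd'' (Dvd.intro_left w hwd'') _ h)
      _ = fdmh (ν * d'') M h := (fdmh_mul hν hd'' M h).symm
      _ = fdmh (e1 * n) M h := by rw [hνd'']
      _ = (h * K - h + 1) * (e1 * n) := by rw [fdmh_def]
      _ = ((h * K - h + 1) * t) * (e1 * e2) := by rw [← hte2]; ring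
      _ ≤ ((h * a - h + 1) * (h * b - h + 1)) * (e1 * e2) := Nat.mul_le_mul_right _ hcore
      _ = (h * a - h + 1) * e1 * ((h * b - h + 1) * e2) := by ring
      _ = fdmh e1 m1 h * fdmh e2 m2 h := by rw [fdmh_def, fdmh_def]
      _ = uFun ν m1 h * uFun n m2 h := by rw [hu1, hu2]

/-! ### The product induction lemma -/

lemma lemmaP (h : ℕ) (hh : 2 ≤ h) :
    ∀ (k : ℕ) (ν : Fin k → ℕ) (nr : ℕ) (ms : Fin k → ℕ) (mr m : ℕ),
      0 < nr → (∀ i, ν i ∣ nr) → (∀ i, 1 ≤ ms i ∧ ms i ≤ ν i) →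
      1 ≤ mr → mr ≤ nr → 1 ≤ m → m ≤ (∏ i, ms i) * mr →
      ∃ ds : Fin k → ℕ, (∀ i, 0 < ds i ∧ ds i ∣ ν i) ∧ m ≤ (∏ i, ds i) * nr ∧
        (∏ i, ds i) * uFun nr (nceil m (∏ i, ds i)) h ≤
          (∏ i, uFun (ν i) (ms i) h) * uFun nr mr h := by
  intro k
  induction k with
  | zero =>
    intro ν nr ms mr m hnr hν hms hmr1 hmrn hm1 hmle
    have h1 : m ≤ mr := by simpa using hmle
    refine ⟨fun _ => 1, fun i => i.elim0, by simpa using h1.trans hmrn, ?_⟩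
    simpa [nceil_one] using uFun_mono hnr h h1
  | succ k ih =>
    intro ν nr ms mr m hnr hν hms hmr1 hmrn hm1 hmle
    obtain ⟨d, hd, hddvd, hdn, hdval⟩ :=
      lemmaF (hν 0) hnr hh (hms 0).1 (hms 0).2 hmr1 hmrn
    set μ := nceil (ms 0 * mr) d with hμdef
    have hμ1 : 1 ≤ μ := nceil_pos (Nat.mul_pos (hms 0).1 hmr1) hd
    have hμn : μ ≤ nr := (nceil_le_iff hd).2 (by rw [Nat.mul_comm nr d]; exact hdn)
    have hmle' : nceil m d ≤ (∏ i : Fin k, ms i.succ) * μ := by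
      refine (nceil_le_iff hd).2 ?_
      calc m ≤ (∏ i : Fin (k+1), ms i) * mr := hmle
      _ = (∏ i : Fin k, ms i.succ) * (ms 0 * mr) := by rw [Fin.prod_univ_succ]; ring
      _ ≤ (∏ i : Fin k, ms i.succ) * (μ * d) :=
          Nat.mul_le_mul_left _ (le_nceil_mul hd _)
      _ = ((∏ i : Fin k, ms i.succ) * μ) * d := by ring
    obtain ⟨ds', hds', hcon', hval'⟩ := ih (fun i => ν i.succ) nr (fun i => ms i.succ) μ
      (nceil m d) hnr (fun i => hν i.succ) (fun i => hms i.succ) hμ1 hμn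
      (nceil_pos hm1 hd) hmle'
    have hprod : (∏ i, Fin.cons d ds' i) = d * (∏ i : Fin k, ds' i) := by
      rw [Fin.prod_univ_succ]; simp
    have hdspos : 0 < ∏ i : Fin k, ds' i := Finset.prod_pos (fun i _ => (hds' i).1)
    refine ⟨Fin.cons d ds', ?_, ?_, ?_⟩
    · intro i
      refine Fin.cases ?_ ?_ i
      · simpa using ⟨hd, hddvd⟩
      · intro j; simpa using hds' j
    · rw [hprod]
      calc m ≤ nceil m d * d := le_nceil_mul hd m
      _ ≤ ((∏ i : Fin k, ds' i) * nr) * d := Nat.mul_le_mul_right d hcon'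
      _ = d * (∏ i : Fin k, ds' i) * nr := by ring
    · rw [hprod]
      calc d * (∏ i : Fin k, ds' i) * uFun nr (nceil m (d * ∏ i : Fin k, ds' i)) h
          = d * ((∏ i : Fin k, ds' i) *
              uFun nr (nceil (nceil m d) (∏ i : Fin k, ds' i)) h) := by
            rw [nceil_nceil hd hdspos]; ring
        _ ≤ d * ((∏ i : Fin k, uFun (ν i.succ) (ms i.succ) h) * uFun nr μ h) :=
            Nat.mul_le_mul_left d hval'
        _ = (∏ i : Fin k, uFun (ν i.succ) (ms i.succ) h) * (d * uFun nr μ h) := by ring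
        _ ≤ (∏ i : Fin k, uFun (ν i.succ) (ms i.succ) h) *
              (uFun (ν 0) (ms 0) h * uFun nr mr h) := Nat.mul_le_mul_left _ hdval
        _ = (∏ i : Fin (k+1), uFun (ν i) (ms i) h) * uFun nr mr h := by
            rw [Fin.prod_univ_succ]; ring

/-- `u±(G, m, h) = min {f_d(m, h) : d ∈ D(G, m)}` for a group of
type `(n_1, …, n_r)`. -/
theorem uPM_eq_min_fdmh_DGm (r : ℕ) (hr : 0 < r) (n : Fin r → ℕ)
    (hn1 : 2 ≤ n ⟨0, hr⟩)
    (hchain : ∀ i : Fin r, ∀ hi : i.val + 1 < r, n i ∣ n ⟨i.val + 1, hi⟩)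
    (m h : ℕ) (hm : 0 < m) (hmn : m ≤ ∏ i, n i) (hh : 2 ≤ h) :
    sInf {k | ∃ ms : Fin r → ℕ, (∀ i, 1 ≤ ms i ∧ ms i ≤ n i) ∧
        m ≤ ∏ i, ms i ∧ k = ∏ i, uFun (n i) (ms i) h} =
    sInf {k | ∃ d : ℕ, d ∣ ∏ i, n i ∧
        (∃ di : Fin r → ℕ, (∀ i, di i ∣ n i) ∧ d = ∏ i, di i ∧
          di ⟨r - 1, by omega⟩ * m ≤ d * n ⟨r - 1, by omega⟩) ∧
        k = fdmh d m h} := by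
  obtain ⟨k, rfl⟩ : ∃ k, r = k + 1 := ⟨r - 1, by omega⟩
  have hNpos : 0 < ∏ i, n i := by omega
  have hnpos : ∀ i, 0 < n i := by
    intro i
    by_contra hcon
    push_neg at hcon
    have h0 : n i = 0 := by omega
    have : (∏ j, n j) = 0 := Finset.prod_eq_zero (Finset.mem_univ i) h0
    omega
  have hmono : ∀ i j : Fin (k + 1), i ≤ j → n i ∣ n j := by
    have H : ∀ t (ht : t < k + 1), ∀ s (hs : s < k + 1), s ≤ t →
        n ⟨s, hs⟩ ∣ n ⟨t, ht⟩ := by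
      intro t
      induction t with
      | zero =>
        intro ht s hs hst
        have hs0 : s = 0 := by omega
        subst hs0
        exact dvd_rfl
      | succ t iht =>
        intro ht s hs hst
        rcases Nat.eq_or_lt_of_le hst with heq | hlt
        · subst heq
          exact dvd_rfl
        · have h1 : s ≤ t := by omega
          have h2 : t < k + 1 := by omega
          exact dvd_trans (iht h2 s hs h1) (hchain ⟨t, h2⟩ ht)
    intro i j hij
    have := H j.val j.isLt i.val i.isLt hij
    simpa using this
  have hlastpos : 0 < n (Fin.last k) := hnpos _
  -- nonemptiness of both sets
  have hSLne : {k' | ∃ ms : Fin (k+1) → ℕ, (∀ i, 1 ≤ ms i ∧ ms i ≤ n i) ∧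
      m ≤ ∏ i, ms i ∧ k' = ∏ i, uFun (n i) (ms i) h}.Nonempty :=
    ⟨∏ i, uFun (n i) (n i) h, n, fun i => ⟨hnpos i, le_rfl⟩, hmn, rfl⟩
  have hSRne : {k' | ∃ d : ℕ, d ∣ ∏ i, n i ∧
      (∃ di : Fin (k+1) → ℕ, (∀ i, di i ∣ n i) ∧ d = ∏ i, di i ∧
        di ⟨k + 1 - 1, by omega⟩ * m ≤ d * n ⟨k + 1 - 1, by omega⟩) ∧
      k' = fdmh d m h}.Nonempty := by
    refine ⟨fdmh (∏ i, n i) m h, ∏ i, n i, dvd_rfl, ⟨n, fun i => dvd_rfl, rfl, ?_⟩, rfl⟩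
    show n (Fin.last k) * m ≤ (∏ i, n i) * n (Fin.last k)
    calc n (Fin.last k) * m ≤ n (Fin.last k) * (∏ i, n i) :=
          Nat.mul_le_mul_left _ hmn
    _ = (∏ i, n i) * n (Fin.last k) := Nat.mul_comm _ _
  apply le_antisymm
  · -- sInf SL ≤ sInf SR : from an optimal RHS element build an LHS element
    obtain ⟨d, hdvd, ⟨di, hdidvd, hdeq, hcon⟩, hkeq⟩ := Nat.sInf_mem hSRne
    have hcon' : di (Fin.last k) * m ≤ d * n (Fin.last k) := hcon
    have hdpos : 0 < d := Nat.pos_of_dvd_of_pos hdvd hNpos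
    have hdipos : ∀ i, 0 < di i := by
      intro i
      rcases Nat.eq_zero_or_pos (di i) with h0 | h0
      · exfalso
        have hz : (∏ j, di j) = 0 := Finset.prod_eq_zero (Finset.mem_univ i) h0
        rw [hdeq, hz] at hdpos
        exact lt_irrefl 0 hdpos
      · exact h0
    set K := nceil m d with hKdef
    have hK1 : 1 ≤ K := nceil_pos hm hdpos
    set ms : Fin (k+1) → ℕ := fun i => di i * (if i = Fin.last k then K else 1) with hmsdef
    have hmscond : ∀ i, 1 ≤ ms i ∧ ms i ≤ n i := by
      intro i
      rcases eq_or_ne i (Fin.last k) with hi | hi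
      · subst hi
        constructor
        · simp only [hmsdef, if_pos rfl]
          exact Nat.mul_pos (hdipos _) hK1
        · simp only [hmsdef, if_pos rfl]
          set q := n (Fin.last k) / di (Fin.last k) with hqdef
          have hq : di (Fin.last k) * q = n (Fin.last k) :=
            Nat.mul_div_cancel' (hdidvd _)
          have h1 : di (Fin.last k) * m ≤ di (Fin.last k) * (d * q) := by
            calc di (Fin.last k) * m ≤ d * n (Fin.last k) := hcon'
            _ = d * (di (Fin.last k) * q) := by rw [hq]
            _ = di (Fin.last k) * (d * q) := by ring
          have h2 : m ≤ d * q := Nat.le_of_mul_le_mul_left h1 (hdipos _)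
          have h3 : K ≤ q := (nceil_le_iff hdpos).2 (by rw [Nat.mul_comm q d]; exact h2)
          calc di (Fin.last k) * K ≤ di (Fin.last k) * q :=
                Nat.mul_le_mul_left _ h3
          _ = n (Fin.last k) := hq
      · constructor
        · simp only [hmsdef, if_neg hi]
          simp
          exact hdipos i
        · simp only [hmsdef, if_neg hi]
          simpa using Nat.le_of_dvd (hnpos i) (hdidvd i)
    have hprod_ite : (∏ i, (if i = Fin.last k then K else 1)) = K := by
      rw [Finset.prod_ite_eq' Finset.univ (Fin.last k) (fun _ => K)]
      simp
    have hmsprod : (∏ i, ms i) = d * K := by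
      calc (∏ i, ms i)
          = (∏ i, di i) * (∏ i, (if i = Fin.last k then K else 1)) :=
            Finset.prod_mul_distrib
      _ = d * K := by rw [← hdeq, hprod_ite]
    have hmge : m ≤ ∏ i, ms i := by
      rw [hmsprod]
      calc m ≤ K * d := le_nceil_mul hdpos m
      _ = d * K := Nat.mul_comm _ _
    have hval : (∏ i, uFun (n i) (ms i) h) ≤ fdmh d m h := by
      have hfac : ∀ i ∈ Finset.univ, uFun (n i) (ms i) h ≤
          di i * (if i = Fin.last k then (h * K - h + 1) else 1) := by
        intro i _
        rcases eq_or_ne i (Fin.last k) with hi | hi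
        · subst hi
          simp only [hmsdef, if_pos rfl]
          calc uFun (n (Fin.last k)) (di (Fin.last k) * K) h
              ≤ fdmh (di (Fin.last k)) (di (Fin.last k) * K) h :=
                uFun_le (hdipos _) (hdidvd _) _ h
          _ = (h * K - h + 1) * di (Fin.last k) := fdmh_mul_self (hdipos _) K h
          _ = di (Fin.last k) * (h * K - h + 1) := Nat.mul_comm _ _
        · simp only [hmsdef, if_neg hi]
          calc uFun (n i) (di i * 1) h = uFun (n i) (di i) h := by rw [Nat.mul_one]
          _ ≤ fdmh (di i) (di i) h := uFun_le (hdipos i) (hdidvd i) _ h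
          _ = di i := fdmh_self (hdipos i) h
          _ = di i * 1 := (Nat.mul_one _).symm
      calc (∏ i, uFun (n i) (ms i) h)
          ≤ ∏ i, (di i * (if i = Fin.last k then (h * K - h + 1) else 1)) :=
            Finset.prod_le_prod' hfac
      _ = (∏ i, di i) * (∏ i, (if i = Fin.last k then (h * K - h + 1) else 1)) :=
            Finset.prod_mul_distrib
      _ = d * (h * K - h + 1) := by
            rw [← hdeq, Finset.prod_ite_eq' Finset.univ (Fin.last k)
              (fun _ => (h * K - h + 1))]
            simp
      _ = fdmh d m h := by rw [fdmh_def, ← hKdef]; ring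
    calc sInf {k' | ∃ ms : Fin (k+1) → ℕ, (∀ i, 1 ≤ ms i ∧ ms i ≤ n i) ∧
          m ≤ ∏ i, ms i ∧ k' = ∏ i, uFun (n i) (ms i) h}
        ≤ ∏ i, uFun (n i) (ms i) h := Nat.sInf_le ⟨ms, hmscond, hmge, rfl⟩
    _ ≤ fdmh d m h := hval
    _ = _ := hkeq.symm
  · -- sInf SR ≤ sInf SL : from an optimal LHS element build an RHS element
    obtain ⟨ms, hms, hmprod, hkeq⟩ := Nat.sInf_mem hSLne
    have hmle : m ≤ (∏ i : Fin k, ms i.castSucc) * ms (Fin.last k) := by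
      rw [← Fin.prod_univ_castSucc]
      exact hmprod
    obtain ⟨ds, hds, hcon, hval⟩ := lemmaP h hh k (fun i => n i.castSucc)
      (n (Fin.last k)) (fun i => ms i.castSucc) (ms (Fin.last k)) m hlastpos
      (fun i => hmono i.castSucc (Fin.last k) (Fin.le_last _))
      (fun i => hms i.castSucc) (hms (Fin.last k)).1 (hms (Fin.last k)).2 hm hmle
    set c := ∏ i : Fin k, ds i with hcdef
    have hcpos : 0 < c := Finset.prod_pos (fun i _ => (hds i).1)
    obtain ⟨e, hepos, hedvd, heq⟩ := uFun_spec hlastpos (nceil m c) h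
    have hdiprod : (∏ i, (Fin.snoc ds e : Fin (k+1) → ℕ) i) = c * e := by
      rw [Fin.prod_univ_castSucc]
      simp
      exact Or.inl hcdef.symm
    have hdidvd : ∀ i, (Fin.snoc ds e : Fin (k+1) → ℕ) i ∣ n i := by
      intro i
      rcases eq_or_ne i (Fin.last k) with hi | hi
      · subst hi
        simpa using hedvd
      · obtain ⟨j, rfl⟩ := Fin.exists_castSucc_eq.mpr hi
        simpa using (hds j).2
    have hddvd : c * e ∣ ∏ i, n i := by
      rw [Fin.prod_univ_castSucc]
      exact mul_dvd_mul
        (Finset.prod_dvd_prod_of_dvd _ _ (fun j _ => (hds j).2)) hedvd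
    have hconR : (Fin.snoc ds e : Fin (k+1) → ℕ) (Fin.last k) * m ≤
        (c * e) * n (Fin.last k) := by
      rw [Fin.snoc_last]
      calc e * m ≤ e * (c * n (Fin.last k)) := Nat.mul_le_mul_left e hcon
      _ = (c * e) * n (Fin.last k) := by ring
    have hfd : fdmh (c * e) m h ≤ ∏ i, uFun (n i) (ms i) h := by
      calc fdmh (c * e) m h = c * fdmh e (nceil m c) h := fdmh_mul hcpos hepos m h
      _ = c * uFun (n (Fin.last k)) (nceil m c) h := by rw [← heq]
      _ ≤ (∏ i : Fin k, uFun (n i.castSucc) (ms i.castSucc) h) *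
            uFun (n (Fin.last k)) (ms (Fin.last k)) h := hval
      _ = ∏ i, uFun (n i) (ms i) h := (Fin.prod_univ_castSucc
            (fun i => uFun (n i) (ms i) h)).symm
    refine le_trans (Nat.sInf_le ?_) (hfd.trans (le_of_eq hkeq.symm))
    exact ⟨c * e, hddvd, ⟨(Fin.snoc ds e : Fin (k+1) → ℕ), hdidvd, hdiprod.symm, hconR⟩, rfl⟩
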